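/- There exists a constant c > 0 such that for every n and any two distinct vertices u, v ∈ [n], the critical Erdős–Rényi random graph G(n,1/n) satisfies P( C(u) = C(v) ) ≤ c n^{−1/3}, i.e. the probability that u and v lie in the same connected component is at most c n^{−1/3}. -/

import Mathlib

open MeasureTheory Filter
open scoped ENNReal

/-- The Erdős–Rényi `G(n, 1/n)` measure on edge configurations of `K_n`:
each potential edge is retained (`true`) independently with probability `1/n`. -/
noncomputable def erMeasure (n : ℕ) : Measure (Sym2 (Fin n) → Bool) :=
  Measure.pi fun _ => (PMF.bernoulli (min (n : ℝ≥0∞)⁻¹ 1).toNNReal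
    (by simpa using ENNReal.toNNReal_mono ENNReal.one_ne_top (min_le_right _ _))).toMeasure

instance (n : ℕ) : IsProbabilityMeasure (erMeasure n) := by
  unfold erMeasure; infer_instance

/-- The simple graph on `Fin n` determined by an edge configuration. -/
def graphOf {n : ℕ} (ω : Sym2 (Fin n) → Bool) : SimpleGraph (Fin n) where
  Adj u v := u ≠ v ∧ ω s(u, v) = true
  symm := by
    refine ⟨fun u v h => ?_⟩
    exact ⟨Ne.symm h.1, by rw [Sym2.eq_swap]; exact h.2⟩
  loopless := by
    refine ⟨fun u h => ?_⟩
    exact h.1 rfl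

section Aux
open Finset


-- A walk is determined by its support.
lemma walk_eq_of_support_eq {V : Type*} {G : SimpleGraph V} {v : V} :
    ∀ {u : V} (p q : G.Walk u v), p.support = q.support → p = q := by
  intro u p
  induction p with
  | nil =>
    intro q h
    cases q with
    | nil => rfl
    | cons h' q' =>
      exfalso
      rw [SimpleGraph.Walk.support_nil, SimpleGraph.Walk.support_cons,
        q'.support_eq_cons] at h
      simp at h
  | cons hadj p ih =>
    intro q h
    cases q with
    | nil =>
      exfalso
      rw [SimpleGraph.Walk.support_nil, SimpleGraph.Walk.support_cons,
        p.support_eq_cons] at h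
      simp at h
    | cons hadj' q' =>
      rw [SimpleGraph.Walk.support_cons, SimpleGraph.Walk.support_cons] at h
      have h' : p.support = q'.support := by simpa using h
      have h2 := h'
      rw [p.support_eq_cons, q'.support_eq_cons] at h2
      obtain ⟨hw, -⟩ := List.cons_eq_cons.mp h2
      subst hw
      rw [ih q' h']


lemma bern_true (n : ℕ) :
    (PMF.bernoulli (min (n : ℝ≥0∞)⁻¹ 1).toNNReal
    (by simpa using ENNReal.toNNReal_mono ENNReal.one_ne_top (min_le_right _ _))).toMeasure {true}
      = min (n : ℝ≥0∞)⁻¹ 1 := by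
  rw [PMF.toMeasure_apply_singleton _ _ (measurableSet_singleton _)]
  exact (PMF.bernoulli_apply _ _).trans <| ENNReal.coe_toNNReal (ne_top_of_le_ne_top ENNReal.one_ne_top (min_le_right _ _))

lemma erMeasure_cyl (n : ℕ) (s : Finset (Sym2 (Fin n))) :
    erMeasure n {ω | ∀ e ∈ s, ω e = true} = (min (n : ℝ≥0∞)⁻¹ 1) ^ s.card := by
  have hset : {ω : Sym2 (Fin n) → Bool | ∀ e ∈ s, ω e = true}
      = Set.pi Set.univ (fun e => if e ∈ s then {true} else Set.univ) := by
    ext ω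
    simp only [Set.mem_setOf_eq, Set.mem_pi, Set.mem_univ, true_implies]
    constructor
    · intro h e
      by_cases he : e ∈ s <;> simp [he, h]
    · intro h e he
      have := h e
      simp [he] at this
      exact this
  rw [hset, erMeasure, Measure.pi_pi]
  simp only [apply_ite (PMF.bernoulli (min (n : ℝ≥0∞)⁻¹ 1).toNNReal
    (by simpa using ENNReal.toNNReal_mono ENNReal.one_ne_top (min_le_right _ _))).toMeasure,
    measure_univ, bern_true]
  rw [Finset.prod_ite_mem, Finset.univ_inter, Finset.prod_const]

lemma reach_subset (n : ℕ) (u v : Fin n) :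
    {ω : Sym2 (Fin n) → Bool | (graphOf ω).Reachable u v} ⊆
      ⋃ P : (⊤ : SimpleGraph (Fin n)).Path u v,
        {ω : Sym2 (Fin n) → Bool | ∀ e ∈ P.1.edges.toFinset, ω e = true} := by
  intro ω h
  obtain ⟨w⟩ := h
  let q : (graphOf ω).Path u v := w.toPath
  refine Set.mem_iUnion.2 ⟨⟨q.1.mapLe le_top, q.2.mapLe _⟩, ?_⟩
  intro e he
  have he' : e ∈ q.1.edges := by
    simp only [List.mem_toFinset, SimpleGraph.Walk.mapLe,
      SimpleGraph.Walk.edges_map] at he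
    obtain ⟨e', he', rfl⟩ := List.mem_map.mp he
    simpa [Sym2.map_id'] using he'
  have := q.1.edges_subset_edgeSet he'
  induction e with
  | h a b => exact ((SimpleGraph.mem_edgeSet _).mp this).2

lemma card_path_len (n : ℕ) (u v : Fin n) (j : ℕ) :
    Fintype.card {P : (⊤ : SimpleGraph (Fin n)).Path u v // P.1.length = j + 1}
      ≤ Nat.descFactorial n j := by
  classical
  have key : ∀ P : {P : (⊤ : SimpleGraph (Fin n)).Path u v // P.1.length = j + 1},
      (P.1.1.support.tail.dropLast).length = j := by
    intro P
    have h1 : P.1.1.support.length = j + 2 := by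
      rw [SimpleGraph.Walk.length_support, P.2]
    rw [List.length_dropLast, List.length_tail, h1]
    omega
  let F : {P : (⊤ : SimpleGraph (Fin n)).Path u v // P.1.length = j + 1} →
      (Fin j ↪ Fin n) := fun P =>
    ⟨fun i => (P.1.1.support.tail.dropLast).get (Fin.cast (key P).symm i), by
      intro a b hab
      have hnd : (P.1.1.support.tail.dropLast).Nodup :=
        (P.1.2.support_nodup.tail).sublist (List.dropLast_sublist _)
      have := (List.Nodup.get_inj_iff hnd).mp hab
      exact Fin.cast_injective _ this⟩
  -- support reconstruction
  have hsupp : ∀ P : {P : (⊤ : SimpleGraph (Fin n)).Path u v // P.1.length = j + 1},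
      P.1.1.support = u :: (P.1.1.support.tail.dropLast ++ [v]) := by
    intro P
    have hne : P.1.1.support.tail ≠ [] := by
      have h2 : P.1.1.support.tail.length = j + 1 := by
        rw [List.length_tail, SimpleGraph.Walk.length_support, P.2]
        omega
      intro hcon
      rw [hcon] at h2
      simp at h2
    have hsne : P.1.1.support ≠ [] := P.1.1.support_ne_nil
    have hlast : P.1.1.support.getLast hsne = v := P.1.1.getLast_support
    have hlast' : P.1.1.support.tail.getLast hne = v := by
      refine Eq.trans ?_ hlast
      refine (((List.getLast_cons (a := u) hne)).symm.trans ?_)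
      exact List.getLast_congr _ _ P.1.1.support_eq_cons.symm
    have hdl := List.dropLast_append_getLast hne
    rw [hlast'] at hdl
    conv_lhs => rw [P.1.1.support_eq_cons, ← hdl]
  have hF : Function.Injective F := by
    intro P1 P2 h12
    have hlist : P1.1.1.support.tail.dropLast = P2.1.1.support.tail.dropLast := by
      apply List.ext_get (by rw [key P1, key P2])
      intro i h1 h2
      have := congrFun (congrArg (fun (f : Fin j ↪ Fin n) => (f : Fin j → Fin n)) h12)
        ⟨i, by rw [key P1] at h1; exact h1⟩
      simpa [F] using this
    have : P1.1.1.support = P2.1.1.support := by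
      rw [hsupp P1, hsupp P2, hlist]
    have := walk_eq_of_support_eq P1.1.1 P2.1.1 this
    exact Subtype.ext (Subtype.ext this)
  calc Fintype.card {P : (⊤ : SimpleGraph (Fin n)).Path u v // P.1.length = j + 1}
      ≤ Fintype.card (Fin j ↪ Fin n) := Fintype.card_le_of_injective F hF
    _ = Nat.descFactorial n j := by
        rw [Fintype.card_embedding_eq, Fintype.card_fin, Fintype.card_fin]

lemma sum_desc_le (n : ℕ) (hn : 1 ≤ n) :
    ∑ j ∈ Finset.range n, ((Nat.descFactorial n j : ℝ) / (n : ℝ) ^ j)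
      ≤ 5 * (n : ℝ) ^ ((2 : ℝ) / 3) := by
  have hn0 : (0 : ℝ) < n := by exact_mod_cast hn
  set t : ℕ → ℝ := fun j => (Nat.descFactorial n j : ℝ) / (n : ℝ) ^ j with ht
  have ht0 : ∀ j, 0 ≤ t j := fun j => by positivity
  have ht1 : ∀ j, t j ≤ 1 := by
    intro j
    rw [ht, div_le_one (by positivity)]
    exact_mod_cast Nat.descFactorial_le_pow n j
  have hanti : Antitone t := by
    apply antitone_nat_of_succ_le
    intro j
    rw [ht]
    simp only
    rw [div_le_div_iff₀ (by positivity) (by positivity), Nat.descFactorial_succ, pow_succ,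
      Nat.cast_mul]
    have h1 : ((n - j : ℕ) : ℝ) ≤ (n : ℝ) := by exact_mod_cast Nat.sub_le n j
    have h2 : (0:ℝ) ≤ (Nat.descFactorial n j : ℝ) := by positivity
    have h3 : (0:ℝ) ≤ (n:ℝ)^j := by positivity
    nlinarith [mul_le_mul_of_nonneg_right h1 (mul_nonneg h2 h3)]
  set x : ℝ := (n : ℝ) ^ ((2 : ℝ) / 3) with hx
  have hx0 : 0 < x := Real.rpow_pos_of_pos hn0 _
  have hx1 : (1 : ℝ) ≤ x := Real.one_le_rpow (by exact_mod_cast hn) (by norm_num)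
  set m : ℕ := ⌈x⌉₊ + 1 with hm
  have hmx : x ≤ ((m : ℕ) : ℝ) - 1 := by
    rw [hm]; push_cast; simp [Nat.le_ceil x]
  have hmx' : x ≤ (m : ℝ) := by
    calc x ≤ (m : ℝ) - 1 := hmx
      _ ≤ (m : ℝ) := by linarith
  have hm3 : (m : ℝ) ≤ 3 * x := by
    rw [hm]; push_cast
    have := Nat.ceil_lt_add_one (le_of_lt hx0)
    linarith
  -- bound on t m
  have htm : t m ≤ Real.exp (-(n : ℝ) ^ ((1 : ℝ) / 3) / 2) := by
    have hD : ((Nat.descFactorial n m : ℕ) : ℝ)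
        ≤ (n : ℝ) ^ m * Real.exp (-(∑ i ∈ range m, (i : ℝ)) / n) := by
      rw [Nat.descFactorial_eq_prod_range]
      push_cast
      calc ∏ i ∈ range m, ((n - i : ℕ) : ℝ)
          ≤ ∏ i ∈ range m, (n : ℝ) * Real.exp (-(i : ℝ) / n) := by
            apply Finset.prod_le_prod (fun i _ => by positivity)
            intro i _
            rcases le_or_gt i n with hin | hin
            · have : ((n - i : ℕ) : ℝ) = (n : ℝ) - i := by
                push_cast [Nat.cast_sub hin]; ring
              rw [this]
              have h1 : (1 : ℝ) - (i : ℝ) / n ≤ Real.exp (-(i : ℝ) / n) := by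
                rw [neg_div]
                linarith [Real.add_one_le_exp (-((i : ℝ) / n))]
              calc (n : ℝ) - i = (n : ℝ) * (1 - (i : ℝ) / n) := by field_simp
                _ ≤ (n : ℝ) * Real.exp (-(i : ℝ) / n) :=
                    mul_le_mul_of_nonneg_left h1 (le_of_lt hn0)
            · have : (n - i : ℕ) = 0 := by omega
              rw [this, Nat.cast_zero]
              positivity
        _ = (n : ℝ) ^ m * Real.exp (-(∑ i ∈ range m, (i : ℝ)) / n) := by
            rw [Finset.prod_mul_distrib, Finset.prod_const, Finset.card_range,
              ← Real.exp_sum]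
            congr 2
            rw [neg_div, ← Finset.sum_div, Finset.sum_neg_distrib, neg_div]
    have ht' : t m ≤ Real.exp (-(∑ i ∈ range m, (i : ℝ)) / n) := by
      rw [ht]
      rw [div_le_iff₀ (by positivity)]
      calc ((Nat.descFactorial n m : ℕ) : ℝ)
          ≤ (n : ℝ) ^ m * Real.exp (-(∑ i ∈ range m, (i : ℝ)) / n) := hD
        _ = Real.exp (-(∑ i ∈ range m, (i : ℝ)) / n) * (n : ℝ) ^ m := by ring
    refine ht'.trans (Real.exp_le_exp.mpr ?_)
    -- -(sum)/n ≤ -(n^{1/3})/2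
    have hsum : (∑ i ∈ range m, (i : ℝ)) = (m : ℝ) * ((m : ℝ) - 1) / 2 := by
      have h2 := Finset.sum_range_id_mul_two m
      have : ((∑ i ∈ range m, i : ℕ) : ℝ) * 2 = (m : ℝ) * ((m : ℝ) - 1) := by
        rw [← Nat.cast_ofNat, ← Nat.cast_mul, h2]
        have hm1 : 1 ≤ m := by omega
        push_cast [Nat.cast_sub hm1]
        ring
      push_cast at this ⊢
      linarith
    rw [hsum]
    rw [div_le_div_iff₀ hn0 (by norm_num : (0:ℝ) < 2)] at *
    have hxx : (n : ℝ) ^ ((1 : ℝ) / 3) * n ≤ (m : ℝ) * ((m : ℝ) - 1) := by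
      have : x * x = (n : ℝ) ^ ((1 : ℝ) / 3) * n := by
        rw [hx, ← Real.rpow_add hn0]
        nth_rewrite 3 [show (n : ℝ) = (n : ℝ) ^ (1 : ℝ) from (Real.rpow_one _).symm]
        rw [← Real.rpow_add hn0]
        norm_num
      rw [← this]
      exact mul_le_mul hmx' hmx (le_of_lt hx0) (by positivity)
    nlinarith [hx0, hn0]
  -- split the sum
  have hsplit : ∑ j ∈ range n, t j
      = ∑ j ∈ (range n).filter (fun j => j < m), t j
        + ∑ j ∈ (range n).filter (fun j => ¬ j < m), t j :=
    (Finset.sum_filter_add_sum_filter_not _ _ _).symm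
  have h1 : ∑ j ∈ (range n).filter (fun j => j < m), t j ≤ (m : ℝ) := by
    calc ∑ j ∈ (range n).filter (fun j => j < m), t j
        ≤ ∑ _j ∈ (range n).filter (fun j => j < m), 1 :=
          Finset.sum_le_sum fun j _ => ht1 j
      _ = ((range n).filter (fun j => j < m)).card := by simp
      _ ≤ (m : ℝ) := by
          have : (range n).filter (fun j => j < m) ⊆ range m := by
            intro j hj
            simp only [Finset.mem_filter, Finset.mem_range] at hj ⊢
            exact hj.2
          have := Finset.card_le_card this
          simp only [Finset.card_range] at this
          exact_mod_cast this
  have h2 : ∑ j ∈ (range n).filter (fun j => ¬ j < m), t j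
      ≤ (n : ℝ) * Real.exp (-(n : ℝ) ^ ((1 : ℝ) / 3) / 2) := by
    calc ∑ j ∈ (range n).filter (fun j => ¬ j < m), t j
        ≤ ∑ _j ∈ (range n).filter (fun j => ¬ j < m),
            Real.exp (-(n : ℝ) ^ ((1 : ℝ) / 3) / 2) := by
          apply Finset.sum_le_sum
          intro j hj
          simp only [Finset.mem_filter, not_lt] at hj
          exact (hanti hj.2).trans htm
      _ = ((range n).filter (fun j => ¬ j < m)).card
            * Real.exp (-(n : ℝ) ^ ((1 : ℝ) / 3) / 2) := by
          rw [Finset.sum_const, nsmul_eq_mul]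
      _ ≤ (n : ℝ) * Real.exp (-(n : ℝ) ^ ((1 : ℝ) / 3) / 2) := by
          apply mul_le_mul_of_nonneg_right _ (Real.exp_pos _).le
          have := Finset.card_filter_le (range n) (fun j => ¬ j < m)
          simp only [Finset.card_range] at this
          exact_mod_cast this
  have h3 : (n : ℝ) * Real.exp (-(n : ℝ) ^ ((1 : ℝ) / 3) / 2) ≤ 2 * x := by
    set y : ℝ := (n : ℝ) ^ ((1 : ℝ) / 3) with hy
    have hy0 : 0 < y := Real.rpow_pos_of_pos hn0 _
    have hnxy : (n : ℝ) = x * y := by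
      rw [hx, hy, ← Real.rpow_add hn0]
      norm_num
    have hkey : y * Real.exp (-y / 2) ≤ 2 := by
      have h4 : y / 2 ≤ Real.exp (y / 2) := by
        have := Real.add_one_le_exp (y / 2)
        linarith
      rw [show -y / 2 = -(y/2) by ring, Real.exp_neg]
      rw [mul_inv_le_iff₀ (Real.exp_pos _)]
      linarith
    calc (n : ℝ) * Real.exp (-y / 2) = x * (y * Real.exp (-y / 2)) := by
          rw [hnxy]; ring
      _ ≤ x * 2 := mul_le_mul_of_nonneg_left hkey (le_of_lt hx0)
      _ = 2 * x := by ring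
  rw [hsplit]
  calc ∑ j ∈ (range n).filter (fun j => j < m), t j
        + ∑ j ∈ (range n).filter (fun j => ¬ j < m), t j
      ≤ (m : ℝ) + (n : ℝ) * Real.exp (-(n : ℝ) ^ ((1 : ℝ) / 3) / 2) := add_le_add h1 h2
    _ ≤ 3 * x + 2 * x := add_le_add hm3 h3
    _ = 5 * x := by ring

lemma shift_sum {f g : ℕ → ℝ} (n : ℕ) (h0 : f 0 = 0) (hstep : ∀ j, f (j + 1) ≤ g j)
    (hg : ∀ j, 0 ≤ g j) : ∑ k ∈ Finset.range n, f k ≤ ∑ j ∈ Finset.range n, g j := by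
  cases n with
  | zero => simp
  | succ m =>
    rw [Finset.sum_range_succ' f m, h0, add_zero]
    calc ∑ i ∈ Finset.range m, f (i + 1) ≤ ∑ i ∈ Finset.range m, g i :=
          Finset.sum_le_sum fun i _ => hstep i
      _ ≤ ∑ i ∈ Finset.range (m + 1), g i := by
          rw [Finset.sum_range_succ]
          linarith [hg m]

end Aux

/-- Size of the connected component of `v`. -/
noncomputable def compSize {n : ℕ} (G : SimpleGraph (Fin n)) (v : Fin n) : ℕ :=
  Nat.card {w : Fin n | G.Reachable v w}

/-- Diameter of a finite graph: maximal distance between two vertices. -/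
noncomputable def gdiam {n : ℕ} (G : SimpleGraph (Fin n)) : ℕ :=
  Finset.univ.sup fun p : Fin n × Fin n => G.dist p.1 p.2

open scoped Classical in
/-- Diameter of the connected component of `x`. -/
noncomputable def compDiam {n : ℕ} (G : SimpleGraph (Fin n)) (x : Fin n) : ℕ :=
  Finset.univ.sup fun p : Fin n × Fin n =>
    if G.Reachable x p.1 ∧ G.Reachable x p.2 then G.dist p.1 p.2 else 0

/-- Product of the weights of the edges of `T`. -/
noncomputable def treeWeight {n : ℕ} (w : Sym2 (Fin n) → ℝ) (T : SimpleGraph (Fin n)) : ℝ :=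
  letI : Fintype T.edgeSet := Fintype.ofFinite _
  ∏ e ∈ T.edgeSet.toFinset, w e

open scoped Classical in
/-- Probability that the `w`-weighted uniform spanning tree of `K_n` lies in `E`. -/
noncomputable def ustProb {n : ℕ} (w : Sym2 (Fin n) → ℝ) (E : Set (SimpleGraph (Fin n))) : ℝ :=
  (∑ T ∈ Finset.univ.filter (fun T : SimpleGraph (Fin n) => T.IsTree ∧ T ∈ E), treeWeight w T) /
    (∑ T ∈ Finset.univ.filter (fun T : SimpleGraph (Fin n) => T.IsTree), treeWeight w T)

/-- The random weights: heavy edges get weight `n^(1+γ)`, the others weight `1`. -/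
noncomputable def weightFn (n : ℕ) (γ : ℝ) (ω : Sym2 (Fin n) → Bool) (e : Sym2 (Fin n)) : ℝ :=
  if ω e then (n : ℝ) ^ ((1 : ℝ) + γ) else 1

/-- There is a constant `c > 0` such that for every `n` and any two
distinct vertices `u, v` of `G(n, 1/n)`, the probability that `u` and `v` lie in the same
connected component (i.e. `C(u) = C(v)`, i.e. `u` and `v` are reachable from one another)
is at most `c n^{−1/3}`. -/
theorem same_component_bound :
    ∃ c > (0 : ℝ), ∀ n : ℕ, ∀ u v : Fin n, u ≠ v →
      (erMeasure n {ω | (graphOf ω).Reachable u v}).toReal ≤ c * (n : ℝ) ^ (-(1 : ℝ) / 3) := by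
    classical
  refine ⟨5, by norm_num, ?_⟩
  intro n u v huv
  have hn2 : 2 ≤ n := by
    have h1 := u.isLt
    have h2 := v.isLt
    have h3 : (u : ℕ) ≠ (v : ℕ) := fun h => huv (Fin.ext h)
    omega
  have hn0 : (0 : ℝ) < n := by
    have : (0 : ℕ) < n := by omega
    exact_mod_cast this
  set p : ℝ≥0∞ := min (n : ℝ≥0∞)⁻¹ 1 with hp
  set N : ℕ → ℕ := fun k =>
    (Finset.univ.filter
      (fun P : (⊤ : SimpleGraph (Fin n)).Path u v => P.1.length = k)).card with hN
  have hmeas : erMeasure n {ω | (graphOf ω).Reachable u v}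
      ≤ ∑ k ∈ Finset.range n, (N k : ℝ≥0∞) * ((n : ℝ≥0∞)⁻¹) ^ k := by
    calc erMeasure n {ω | (graphOf ω).Reachable u v}
        ≤ erMeasure n (⋃ P : (⊤ : SimpleGraph (Fin n)).Path u v,
            {ω | ∀ e ∈ P.1.edges.toFinset, ω e = true}) :=
          measure_mono (reach_subset n u v)
      _ ≤ ∑' P : (⊤ : SimpleGraph (Fin n)).Path u v,
            erMeasure n {ω | ∀ e ∈ P.1.edges.toFinset, ω e = true} := measure_iUnion_le _
      _ = ∑ P : (⊤ : SimpleGraph (Fin n)).Path u v, p ^ P.1.length := by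
          rw [tsum_fintype]
          refine Finset.sum_congr rfl fun P _ => ?_
          rw [erMeasure_cyl, List.toFinset_card_of_nodup P.2.isTrail.edges_nodup,
            SimpleGraph.Walk.length_edges]
      _ = ∑ k ∈ Finset.range n, ∑ P ∈ Finset.univ.filter
            (fun P : (⊤ : SimpleGraph (Fin n)).Path u v => P.1.length = k),
              p ^ P.1.length := by
          refine (Finset.sum_fiberwise_of_maps_to ?_ _).symm
          intro P _
          rw [Finset.mem_range]
          have h1 : P.1.support.length ≤ n := by
            have := P.2.support_nodup.length_le_card
            simpa using this
          have h2 := P.1.length_support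
          omega
      _ = ∑ k ∈ Finset.range n, (N k : ℝ≥0∞) * p ^ k := by
          refine Finset.sum_congr rfl fun k _ => ?_
          rw [Finset.sum_congr rfl
            (fun P hP => by rw [(Finset.mem_filter.mp hP).2] : ∀ P ∈ Finset.univ.filter
              (fun P : (⊤ : SimpleGraph (Fin n)).Path u v => P.1.length = k),
                p ^ P.1.length = p ^ k)]
          rw [Finset.sum_const, nsmul_eq_mul, hN]
      _ ≤ ∑ k ∈ Finset.range n, (N k : ℝ≥0∞) * ((n : ℝ≥0∞)⁻¹) ^ k := by
          refine Finset.sum_le_sum fun k _ => ?_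
          exact mul_le_mul_right (pow_le_pow_left' (min_le_left _ _) k) _
  have hfin : ∀ k ∈ Finset.range n, (N k : ℝ≥0∞) * ((n : ℝ≥0∞)⁻¹) ^ k ≠ ∞ := by
    intro k _
    apply ENNReal.mul_ne_top (ENNReal.natCast_ne_top _)
    apply ENNReal.pow_ne_top
    simp
    omega
  have hS : (∑ k ∈ Finset.range n, (N k : ℝ≥0∞) * ((n : ℝ≥0∞)⁻¹) ^ k) ≠ ∞ :=
    ENNReal.sum_ne_top.mpr hfin
  have h1 : (erMeasure n {ω | (graphOf ω).Reachable u v}).toReal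
      ≤ (∑ k ∈ Finset.range n, (N k : ℝ≥0∞) * ((n : ℝ≥0∞)⁻¹) ^ k).toReal :=
    ENNReal.toReal_mono hS hmeas
  have h2 : (∑ k ∈ Finset.range n, (N k : ℝ≥0∞) * ((n : ℝ≥0∞)⁻¹) ^ k).toReal
      = ∑ k ∈ Finset.range n, (N k : ℝ) * ((n : ℝ)⁻¹) ^ k := by
    rw [ENNReal.toReal_sum hfin]
    refine Finset.sum_congr rfl fun k _ => ?_
    rw [ENNReal.toReal_mul, ENNReal.toReal_pow, ENNReal.toReal_inv]
    simp
  have hN0 : N 0 = 0 := by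
    rw [hN]
    simp only
    rw [Finset.card_eq_zero, Finset.filter_eq_empty_iff]
    intro P _
    intro hlen
    exact huv (SimpleGraph.Walk.eq_of_length_eq_zero hlen)
  have hNs : ∀ j, (N (j + 1) : ℝ) ≤ (Nat.descFactorial n j : ℝ) := by
    intro j
    have hc := card_path_len n u v j
    rw [Fintype.card_subtype] at hc
    exact_mod_cast hc
  have h3 : ∑ k ∈ Finset.range n, (N k : ℝ) * ((n : ℝ)⁻¹) ^ k
      ≤ ∑ j ∈ Finset.range n, (Nat.descFactorial n j : ℝ) * ((n : ℝ)⁻¹) ^ (j + 1) := by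
    refine shift_sum n (by simp [hN0]) (fun j => ?_) (fun j => by positivity)
    exact mul_le_mul_of_nonneg_right (hNs j) (by positivity)
  have h4 : ∑ j ∈ Finset.range n, (Nat.descFactorial n j : ℝ) * ((n : ℝ)⁻¹) ^ (j + 1)
      = (n : ℝ)⁻¹ * ∑ j ∈ Finset.range n, (Nat.descFactorial n j : ℝ) / (n : ℝ) ^ j := by
    rw [Finset.mul_sum]
    refine Finset.sum_congr rfl fun j _ => ?_
    rw [pow_succ, inv_pow, div_eq_mul_inv]
    ring
  have h5 := sum_desc_le n (by omega)
  have h6 : (n : ℝ)⁻¹ * (5 * (n : ℝ) ^ ((2 : ℝ) / 3)) = 5 * (n : ℝ) ^ (-(1 : ℝ) / 3) := by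
    rw [← Real.rpow_neg_one (n : ℝ), mul_comm ((n : ℝ) ^ (-1 : ℝ)), mul_assoc,
      ← Real.rpow_add hn0]
    norm_num
  calc (erMeasure n {ω | (graphOf ω).Reachable u v}).toReal
      ≤ ∑ k ∈ Finset.range n, (N k : ℝ) * ((n : ℝ)⁻¹) ^ k := h2 ▸ h1
    _ ≤ ∑ j ∈ Finset.range n, (Nat.descFactorial n j : ℝ) * ((n : ℝ)⁻¹) ^ (j + 1) := h3
    _ = (n : ℝ)⁻¹ * ∑ j ∈ Finset.range n, (Nat.descFactorial n j : ℝ) / (n : ℝ) ^ j := h4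
    _ ≤ (n : ℝ)⁻¹ * (5 * (n : ℝ) ^ ((2 : ℝ) / 3)) :=
        mul_le_mul_of_nonneg_left h5 (by positivity)
    _ = 5 * (n : ℝ) ^ (-(1 : ℝ) / 3) := h6
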